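/- arXiv:1302.3865 — 2 statements merged into one kernel-verified Lean document; each statement's English description precedes it below -/
import Mathlib

section
/- For a positive definite matrix x, ln x = ∫₀^∞ ((1+t)⁻¹·I − (x + t·I)⁻¹) dt, where the integral converges. -/
open Matrix MeasureTheory Filter
open scoped ComplexOrder

attribute [local instance] Matrix.frobeniusNormedAddCommGroup Matrix.frobeniusNormedSpace

noncomputable instance frobeniusContinuousENorm {n : Type*} [Fintype n] :
    ContinuousENorm (Matrix n n ℂ) :=
  SeminormedAddGroup.toContinuousENorm

/-- Scalar version: `∫₀^∞ ((1+t)⁻¹ - (l+t)⁻¹) dt = log l` for `l > 0`. -/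
lemma log_posDef_eq_integral_scalar_aux {l : ℝ} (hl : 0 < l) :
    IntegrableOn (fun t : ℝ => (1 + t)⁻¹ - (l + t)⁻¹) (Set.Ioi 0) ∧
    ∫ t in Set.Ioi (0:ℝ), ((1 + t)⁻¹ - (l + t)⁻¹) = Real.log l := by
  set g : ℝ → ℝ := fun t => Real.log (1 + t) - Real.log (l + t) with hg
  have hderiv : ∀ t ∈ Set.Ici (0:ℝ), HasDerivAt g ((1 + t)⁻¹ - (l + t)⁻¹) t := by
    intro t ht
    have h1 : (0:ℝ) < 1 + t := by simp at ht; linarith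
    have h2 : (0:ℝ) < l + t := by simp at ht; linarith
    have d1 : HasDerivAt (fun t : ℝ => Real.log (1 + t)) (1 / (1 + t)) t := by
      simpa using (((hasDerivAt_id t).const_add 1).log h1.ne')
    have d2 : HasDerivAt (fun t : ℝ => Real.log (l + t)) (1 / (l + t)) t := by
      simpa using (((hasDerivAt_id t).const_add l).log h2.ne')
    have := d1.sub d2
    simp only [one_div] at this
    exact this
  have htend : Tendsto g atTop (nhds 0) := by
    have h1 : Tendsto (fun t : ℝ => 1 + (1 - l) / (l + t)) atTop (nhds 1) := by
      have : Tendsto (fun t : ℝ => (1 - l) / (l + t)) atTop (nhds 0) :=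
        Tendsto.div_atTop tendsto_const_nhds (tendsto_atTop_add_const_left _ _ tendsto_id)
      simpa using (tendsto_const_nhds (x := (1:ℝ))).add this
    have h2 : Tendsto (fun t : ℝ => Real.log (1 + (1 - l) / (l + t))) atTop (nhds 0) := by
      have := ((Real.continuousAt_log one_ne_zero).tendsto).comp h1
      simp only [Real.log_one] at this
      exact this
    refine h2.congr' ?_
    filter_upwards [eventually_gt_atTop (0:ℝ)] with t ht
    have h1t : (0:ℝ) < 1 + t := by linarith
    have h2t : (0:ℝ) < l + t := by linarith
    rw [hg]
    have : 1 + (1 - l) / (l + t) = (1 + t) / (l + t) := by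
      field_simp; ring
    rw [this, Real.log_div h1t.ne' h2t.ne']
  have hg0 : g 0 = -Real.log l := by simp [hg]
  rcases le_total 1 l with hcase | hcase
  · have hpos : ∀ t ∈ Set.Ioi (0:ℝ), 0 ≤ (1 + t)⁻¹ - (l + t)⁻¹ := by
      intro t ht
      simp only [Set.mem_Ioi] at ht
      have h1 : (0:ℝ) < 1 + t := by linarith
      rw [sub_nonneg]
      exact inv_anti₀ h1 (by linarith)
    refine ⟨integrableOn_Ioi_deriv_of_nonneg' hderiv hpos htend, ?_⟩
    rw [integral_Ioi_of_hasDerivAt_of_nonneg' hderiv hpos htend, hg0]; ring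
  · have hneg : ∀ t ∈ Set.Ioi (0:ℝ), (1 + t)⁻¹ - (l + t)⁻¹ ≤ 0 := by
      intro t ht
      simp only [Set.mem_Ioi] at ht
      have h2 : (0:ℝ) < l + t := by linarith
      rw [sub_nonpos]
      exact inv_anti₀ h2 (by linarith)
    refine ⟨integrableOn_Ioi_deriv_of_nonpos' hderiv hneg htend, ?_⟩
    rw [integral_Ioi_of_hasDerivAt_of_nonpos' hderiv hneg htend, hg0]; ring

/-- A diagonal matrix with real entries as a sum of scaled standard basis matrices. -/
lemma log_posDef_diagonal_eq_sum_smul {n : Type*} [Fintype n] [DecidableEq n] (r : n → ℝ) :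
    diagonal (fun i => (r i : ℂ)) = ∑ i, r i • Matrix.single i i (1 : ℂ) := by
  ext a b
  simp only [Matrix.sum_apply, Matrix.smul_apply, Matrix.single, of_apply, smul_ite, smul_zero,
    Finset.sum_ite_eq, diagonal]
  by_cases h : a = b
  · simp [h, Finset.sum_ite_eq, Complex.real_smul, and_comm]
  · rw [Finset.sum_eq_zero]
    · simp [h, diagonal]
    · intro i _
      by_cases hia : i = a <;> simp_all

/-- Pointwise diagonalization of the integrand. -/
lemma log_posDef_integrand_eq {n : Type*} [Fintype n] [DecidableEq n]
    (x : Matrix n n ℂ) (hx : x.PosDef) (t : ℝ) (ht : 0 < t) :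
    (1 + t)⁻¹ • (1 : Matrix n n ℂ) - (x + t • 1)⁻¹
      = (hx.1.eigenvectorUnitary : Matrix n n ℂ)
        * diagonal (fun i => (((1 + t)⁻¹ - (hx.1.eigenvalues i + t)⁻¹ : ℝ) : ℂ))
        * star (hx.1.eigenvectorUnitary : Matrix n n ℂ) := by
  set U : Matrix n n ℂ := (hx.1.eigenvectorUnitary : Matrix n n ℂ) with hU
  have hU1 : U * star U = 1 := Matrix.mem_unitaryGroup_iff.mp hx.1.eigenvectorUnitary.2
  have hU2 : star U * U = 1 := Matrix.mem_unitaryGroup_iff'.mp hx.1.eigenvectorUnitary.2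
  have hlam : ∀ i, 0 < hx.1.eigenvalues i := hx.eigenvalues_pos
  have hsmul : ∀ r : ℝ, r • (1 : Matrix n n ℂ) = diagonal (fun _ => (r : ℂ)) := by
    intro r; ext a b; by_cases h : a = b <;> simp [h, Matrix.one_apply, Complex.real_smul]
  have hxdecomp : x + t • 1
      = U * diagonal (fun i => ((hx.1.eigenvalues i + t : ℝ) : ℂ)) * star U := by
    conv_lhs => rw [hx.1.spectral_theorem, Unitary.conjStarAlgAut_apply]
    have h1 : (t : ℝ) • (1 : Matrix n n ℂ) = U * diagonal (fun _ => (t : ℂ)) * star U := by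
      have : diagonal (fun _ : n => (t : ℂ)) = (t : ℂ) • (1 : Matrix n n ℂ) := by
        ext a b; by_cases h : a = b <;> simp [h, Matrix.one_apply]
      rw [hsmul, this, mul_smul_comm, smul_mul_assoc, Matrix.mul_one, hU1]
    rw [← hU, h1, ← Matrix.add_mul, ← Matrix.mul_add, diagonal_add]
    congr 1
    ext i
    simp [Function.comp]
  have hDinv : (x + t • 1)⁻¹
      = U * diagonal (fun i => (((hx.1.eigenvalues i + t : ℝ) : ℂ))⁻¹) * star U := by
    apply Matrix.inv_eq_right_inv
    rw [hxdecomp]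
    calc (U * diagonal (fun i => ((hx.1.eigenvalues i + t : ℝ) : ℂ)) * star U)
          * (U * diagonal (fun i => (((hx.1.eigenvalues i + t : ℝ) : ℂ))⁻¹) * star U)
        = U * (diagonal (fun i => ((hx.1.eigenvalues i + t : ℝ) : ℂ))
            * (star U * U)
            * diagonal (fun i => (((hx.1.eigenvalues i + t : ℝ) : ℂ))⁻¹)) * star U := by
          simp only [Matrix.mul_assoc]
      _ = 1 := by
          rw [hU2, Matrix.mul_one, Matrix.diagonal_mul_diagonal]
          have : ∀ i, ((hx.1.eigenvalues i + t : ℝ) : ℂ)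
              * (((hx.1.eigenvalues i + t : ℝ) : ℂ))⁻¹ = 1 := by
            intro i
            apply mul_inv_cancel₀
            exact_mod_cast (by have := hlam i; linarith : (0:ℝ) < hx.1.eigenvalues i + t).ne'
          simp only [this]
          rw [Matrix.diagonal_one, Matrix.mul_one, hU1]
  have hone : ((1 + t)⁻¹ : ℝ) • (1 : Matrix n n ℂ)
      = U * diagonal (fun _ : n => (((1 + t)⁻¹ : ℝ) : ℂ)) * star U := by
    have : diagonal (fun _ : n => (((1 + t)⁻¹ : ℝ) : ℂ))
        = (((1 + t)⁻¹ : ℝ) : ℂ) • (1 : Matrix n n ℂ) := by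
      ext a b; by_cases h : a = b <;> simp [h, Matrix.one_apply]
    rw [hsmul, this, mul_smul_comm, smul_mul_assoc, Matrix.mul_one, hU1]
  have hdsub : (diagonal (fun _ : n => (((1 + t)⁻¹ : ℝ) : ℂ))
      - diagonal (fun i => (((hx.1.eigenvalues i + t : ℝ) : ℂ))⁻¹))
      = diagonal (fun i => (((1 + t)⁻¹ - (hx.1.eigenvalues i + t)⁻¹ : ℝ) : ℂ)) := by
    rw [diagonal_sub]
    congr 1
    ext i
    push_cast
    ring
  rw [hone, hDinv, ← Matrix.sub_mul, ← Matrix.mul_sub, hdsub]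

set_option maxHeartbeats 2000000 in
/-- For a positive definite matrix `x`,
`ln x = ∫₀^∞ ((1+t)⁻¹ • I − (x + t • I)⁻¹) dt`, and the integral converges. -/
theorem log_posDef_eq_integral
    {n : Type*} [Fintype n] [DecidableEq n] (x : Matrix n n ℂ) (hx : x.PosDef) :
    IntegrableOn (fun t : ℝ => (1 + t)⁻¹ • (1 : Matrix n n ℂ) - (x + t • 1)⁻¹)
      (Set.Ioi (0 : ℝ)) ∧
    hx.1.cfc Real.log
      = ∫ t in Set.Ioi (0 : ℝ), ((1 + t)⁻¹ • (1 : Matrix n n ℂ) - (x + t • 1)⁻¹) := by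
  set U : Matrix n n ℂ := (hx.1.eigenvectorUnitary : Matrix n n ℂ) with hU
  have hlam : ∀ i, 0 < hx.1.eigenvalues i := hx.eigenvalues_pos
  set M : n → Matrix n n ℂ := fun i => U * Matrix.single i i (1 : ℂ) * star U with hM
  have hsum : ∀ (r : n → ℝ), U * diagonal (fun i => (r i : ℂ)) * star U = ∑ i, r i • M i := by
    intro r
    rw [log_posDef_diagonal_eq_sum_smul, Finset.mul_sum, Finset.sum_mul]
    exact Finset.sum_congr rfl fun i _ => by rw [mul_smul_comm, smul_mul_assoc]
  -- the pointwise identity, in sum form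
  have hptwise : ∀ t ∈ Set.Ioi (0:ℝ),
      (1 + t)⁻¹ • (1 : Matrix n n ℂ) - (x + t • 1)⁻¹
        = ∑ i, ((1 + t)⁻¹ - (hx.1.eigenvalues i + t)⁻¹ : ℝ) • M i := by
    intro t ht
    rw [log_posDef_integrand_eq x hx t ht, ← hU, hsum]
  -- integrability of the sum form
  have hIntF : IntegrableOn
      (fun t : ℝ => ∑ i, ((1 + t)⁻¹ - (hx.1.eigenvalues i + t)⁻¹ : ℝ) • M i)
      (Set.Ioi (0:ℝ)) := by
    unfold IntegrableOn
    refine @integrable_finset_sum ℝ _ _ (Matrix n n ℂ) _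
      NormedAddCommGroup.toENormedAddCommMonoid.toESeminormedAddCommMonoid _ n _ _ fun i _ => ?_
    exact (log_posDef_eq_integral_scalar_aux (hlam i)).1.smul_const (M i)
  have hIntegrand : IntegrableOn
      (fun t : ℝ => (1 + t)⁻¹ • (1 : Matrix n n ℂ) - (x + t • 1)⁻¹) (Set.Ioi (0:ℝ)) :=
    integrableOn_congr_fun hptwise measurableSet_Ioi |>.mpr hIntF
  refine ⟨hIntegrand, ?_⟩
  rw [setIntegral_congr_fun measurableSet_Ioi hptwise,
    integral_finset_sum _ (fun i _ => (log_posDef_eq_integral_scalar_aux (hlam i)).1.smul_const (M i))]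
  have : ∀ i : n, (∫ t in Set.Ioi (0:ℝ),
      ((1 + t)⁻¹ - (hx.1.eigenvalues i + t)⁻¹ : ℝ) • M i)
      = Real.log (hx.1.eigenvalues i) • M i := by
    intro i
    rw [integral_smul_const, (log_posDef_eq_integral_scalar_aux (hlam i)).2]
  rw [Finset.sum_congr rfl fun i _ => this i, ← hsum]
  show hx.1.cfc Real.log = _
  rw [Matrix.IsHermitian.cfc]
  rfl
end

section
/- Let {ρ_x}_{x∈X} be a finite family of density matrices, weights p(x) ≥ 0 summing to 1, ρ = Σ_x p(x) ρ_x positive definite, and x₀ an index maximizing p. For any family of Hermitian matrices {H_x} with 0 ≤ H_x ≤ I and H_{x₀} = I, the quantity Λ = −i Σ_x p(x) Tr(H_x [ρ_x, ln ρ]) satisfies |Λ| ≤ 2 Σ_{x≠x₀} Σ_{y≠x} √(p(x)p(y)). -/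
open Matrix Finset
open scoped ComplexOrder

section ScalarAux
open MeasureTheory Set Filter Real

noncomputable def lphi (a b : ℝ) : ℝ := ∫ s in Ioi (0:ℝ), ((a+s)*(b+s))⁻¹

lemma lphi_symm (a b : ℝ) : lphi a b = lphi b a := by
  unfold lphi; congr 1; funext s; rw [mul_comm]

lemma lphi_nonneg (a b : ℝ) (ha : 0 < a) (hb : 0 < b) : 0 ≤ lphi a b := by
  apply setIntegral_nonneg measurableSet_Ioi
  intro s hs
  have : 0 < s := hs
  positivity

section deriv
variable {a b : ℝ}

private lemma had_same (ha : 0 < a) {x : ℝ} (hx : x ∈ Ici (0:ℝ)) :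
    HasDerivAt (fun s => -(a+s)⁻¹) (((a+x)*(a+x))⁻¹) x := by
  have hx' : (0:ℝ) ≤ x := hx
  have h : HasDerivAt (fun s : ℝ => a + s) 1 x := (hasDerivAt_id x).const_add a
  have h2 := (h.inv (by positivity)).neg
  refine h2.congr_deriv ?_
  field_simp

private lemma had_ne (ha : 0 < a) (hb : 0 < b) {x : ℝ} (hx : x ∈ Ici (0:ℝ)) :
    HasDerivAt (fun s => (Real.log (a+s) - Real.log (b+s))/(b-a))
      ((b-a)⁻¹ * ((a+x)⁻¹ - (b+x)⁻¹)) x := by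
  have hx' : (0:ℝ) ≤ x := hx
  have h1 : HasDerivAt (fun s : ℝ => a + s) 1 x := (hasDerivAt_id x).const_add a
  have h2 : HasDerivAt (fun s : ℝ => b + s) 1 x := (hasDerivAt_id x).const_add b
  have l1 := h1.log (by positivity)
  have l2 := h2.log (by positivity)
  have := (l1.sub l2).div_const (b - a)
  refine this.congr_deriv ?_
  field_simp

private lemma deriv_eq_integrand (ha : 0 < a) (hb : 0 < b) (hab : a ≠ b) {x : ℝ}
    (hx : x ∈ Ici (0:ℝ)) :
    (b-a)⁻¹ * ((a+x)⁻¹ - (b+x)⁻¹) = ((a+x)*(b+x))⁻¹ := by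
  have hx' : (0:ℝ) ≤ x := hx
  have h1 : (0:ℝ) < a + x := by positivity
  have h2 : (0:ℝ) < b + x := by positivity
  have h3 : b - a ≠ 0 := sub_ne_zero.mpr (Ne.symm hab)
  field_simp
  ring

private lemma tendsto_ne (ha : 0 < a) (hb : 0 < b) :
    Tendsto (fun s => (Real.log (a+s) - Real.log (b+s))/(b-a)) atTop (nhds 0) := by
  have h1 : Tendsto (fun s : ℝ => 1 + (a-b)/(b+s)) atTop (nhds 1) := by
    have hb' : Tendsto (fun s : ℝ => b + s) atTop atTop :=
      tendsto_atTop_add_const_left _ b tendsto_id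
    have h0 := (tendsto_const_nhds (x := (1:ℝ))).add ((hb'.inv_tendsto_atTop).const_mul (a-b))
    simpa [div_eq_mul_inv] using h0
  have h2 : Tendsto (fun s : ℝ => Real.log (1 + (a-b)/(b+s))) atTop (nhds 0) := by
    have hc : ContinuousAt Real.log 1 := Real.continuousAt_log one_ne_zero
    simpa [Function.comp_def] using hc.tendsto.comp h1
  have h3 : (fun s : ℝ => Real.log (1 + (a-b)/(b+s))) =ᶠ[atTop]
      (fun s => Real.log (a+s) - Real.log (b+s)) := by
    filter_upwards [eventually_ge_atTop (0:ℝ)] with s hs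
    have h1' : (0:ℝ) < a + s := by positivity
    have h2' : (0:ℝ) < b + s := by positivity
    rw [← Real.log_div h1'.ne' h2'.ne']
    congr 1
    field_simp
    ring
  have h4 := h2.congr' h3
  simpa using h4.div_const (b-a)

lemma lphi_integrableOn (ha : 0 < a) (hb : 0 < b) :
    IntegrableOn (fun s => ((a+s)*(b+s))⁻¹) (Ioi (0:ℝ)) := by
  rcases eq_or_ne a b with rfl | hab
  · exact integrableOn_Ioi_deriv_of_nonneg' (fun x hx => had_same ha hx)
      (fun x hx => by have : 0 < x := hx; positivity) (by
        have hb' : Tendsto (fun s : ℝ => a + s) atTop atTop :=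
          tendsto_atTop_add_const_left _ a tendsto_id
        simpa using (hb'.inv_tendsto_atTop).neg)
  · have := integrableOn_Ioi_deriv_of_nonneg'
      (g := fun s => (Real.log (a+s) - Real.log (b+s))/(b-a))
      (g' := fun s => ((a+s)*(b+s))⁻¹)
      (fun x hx => by have h := had_ne ha hb hx; rwa [deriv_eq_integrand ha hb hab hx] at h)
      (fun x hx => by have : 0 < x := hx; positivity) (tendsto_ne ha hb)
    exact this

lemma lphi_self (ha : 0 < a) : lphi a a = a⁻¹ := by
  unfold lphi
  have := integral_Ioi_of_hasDerivAt_of_tendsto'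
      (f := fun s => -(a+s)⁻¹) (f' := fun s => ((a+s)*(a+s))⁻¹)
      (fun x hx => had_same ha hx) (lphi_integrableOn ha ha) (by
        have hb' : Tendsto (fun s : ℝ => a + s) atTop atTop :=
          tendsto_atTop_add_const_left _ a tendsto_id
        simpa using (hb'.inv_tendsto_atTop).neg)
  rw [this]
  simp

lemma lphi_mul (ha : 0 < a) (hb : 0 < b) :
    (b - a) * lphi a b = Real.log b - Real.log a := by
  rcases eq_or_ne a b with rfl | hab
  · simp
  · unfold lphi
    have := integral_Ioi_of_hasDerivAt_of_tendsto'
        (f := fun s => (Real.log (a+s) - Real.log (b+s))/(b-a))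
        (f' := fun s => ((a+s)*(b+s))⁻¹)
        (fun x hx => by have h := had_ne ha hb hx; rwa [deriv_eq_integrand ha hb hab hx] at h)
        (lphi_integrableOn ha hb) (tendsto_ne ha hb)
    rw [this]
    have h3 : b - a ≠ 0 := sub_ne_zero.mpr (Ne.symm hab)
    field_simp
    simp

end deriv
end ScalarAux

section MatrixAux
open Matrix
open scoped ComplexOrder
set_option linter.unusedSectionVars false

variable {n : Type*} [Fintype n] [DecidableEq n]

lemma psd_diag_nonneg {T : Matrix n n ℂ} (hT : T.PosSemidef) (j : n) : 0 ≤ T j j := by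
  exact hT.diag_nonneg

lemma psd_trace_eq {T : Matrix n n ℂ} (hT : T.PosSemidef) :
    ∃ c : ℝ, 0 ≤ c ∧ T.trace = (c:ℂ) := by
  have h : 0 ≤ T.trace := Finset.sum_nonneg fun j _ => psd_diag_nonneg hT j
  rw [Complex.le_def] at h
  exact ⟨T.trace.re, by simpa using h.1, by apply Complex.ext <;> simp [h.2.symm]⟩

lemma smul_psd {c : ℝ} (hc : 0 ≤ c) {M : Matrix n n ℂ} (hM : M.PosSemidef) :
    (c • M).PosSemidef := by
  refine Matrix.PosSemidef.of_dotProduct_mulVec_nonneg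
    (by simp [Matrix.IsHermitian, hM.1.eq]) fun x => ?_
  have h := hM.dotProduct_mulVec_nonneg x
  have : star x ⬝ᵥ (c • M) *ᵥ x = (c:ℂ) * (star x ⬝ᵥ M *ᵥ x) := by
    simp [Matrix.smul_mulVec, dotProduct_smul, Complex.real_smul]
  rw [this]
  exact mul_nonneg (by exact_mod_cast hc) h

noncomputable def Qf (r : n → ℝ) (G A B : Matrix n n ℂ) : ℂ :=
  ∑ j, ∑ k, G k j * ((Aᴴ * B) j k) * ((lphi (r j) (r k) : ℝ) : ℂ)

variable {r : n → ℝ} {G A B C : Matrix n n ℂ}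

lemma Qf_add_left : Qf r G (A + C) B = Qf r G A B + Qf r G C B := by
  simp only [Qf, Matrix.conjTranspose_add, Matrix.add_mul, Matrix.add_apply]
  rw [← Finset.sum_add_distrib]
  refine Finset.sum_congr rfl fun j _ => ?_
  rw [← Finset.sum_add_distrib]
  exact Finset.sum_congr rfl fun k _ => by ring

lemma Qf_add_right : Qf r G A (B + C) = Qf r G A B + Qf r G A C := by
  simp only [Qf, Matrix.mul_add, Matrix.add_apply]
  rw [← Finset.sum_add_distrib]
  refine Finset.sum_congr rfl fun j _ => ?_
  rw [← Finset.sum_add_distrib]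
  exact Finset.sum_congr rfl fun k _ => by ring

lemma Qf_smul_left (z : ℂ) : Qf r G (z • A) B = starRingEnd ℂ z * Qf r G A B := by
  simp only [Qf, Matrix.conjTranspose_smul, Matrix.smul_mul, Matrix.smul_apply, Finset.mul_sum]
  refine Finset.sum_congr rfl fun j _ => Finset.sum_congr rfl fun k _ => ?_
  simp [smul_eq_mul]
  ring

lemma Qf_smul_right (z : ℂ) : Qf r G A (z • B) = z * Qf r G A B := by
  simp only [Qf, Matrix.mul_smul, Matrix.smul_apply, Finset.mul_sum]
  refine Finset.sum_congr rfl fun j _ => Finset.sum_congr rfl fun k _ => ?_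
  simp [smul_eq_mul]
  ring

lemma Qf_G_add {G' : Matrix n n ℂ} : Qf r (G + G') A B = Qf r G A B + Qf r G' A B := by
  simp only [Qf, Matrix.add_apply]
  rw [← Finset.sum_add_distrib]
  refine Finset.sum_congr rfl fun j _ => ?_
  rw [← Finset.sum_add_distrib]
  exact Finset.sum_congr rfl fun k _ => by ring

lemma Qf_conj (hG : G.IsHermitian) :
    starRingEnd ℂ (Qf r G A B) = Qf r G B A := by
  unfold Qf
  rw [map_sum]
  rw [Finset.sum_comm]
  refine Finset.sum_congr rfl fun j _ => ?_
  rw [map_sum]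
  refine Finset.sum_congr rfl fun k _ => ?_
  rw [_root_.map_mul, _root_.map_mul]
  have h1 : starRingEnd ℂ (G k j) = G j k := hG.apply j k
  have h2 : starRingEnd ℂ ((Aᴴ * B) j k) = (Bᴴ * A) k j := by
    have h3 : (Bᴴ * A) = (Aᴴ * B)ᴴ := by
      rw [Matrix.conjTranspose_mul, Matrix.conjTranspose_conjTranspose]
    rw [h3, Matrix.conjTranspose_apply]
    rfl
  rw [h1, h2, lphi_symm (r j) (r k)]
  simp
end MatrixAux

section MatrixAux2
open Matrix MeasureTheory Set
open scoped ComplexOrder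
set_option linter.unusedSectionVars false
set_option maxHeartbeats 1000000

variable {n : Type*} [Fintype n] [DecidableEq n]
variable {r : n → ℝ} {G A B : Matrix n n ℂ}

lemma trace_mul_entries (M G : Matrix n n ℂ) :
    (M * G).trace = ∑ j, ∑ k, M j k * G k j := by
  simp [Matrix.trace, Matrix.mul_apply, Matrix.diag]

lemma Qf_one (hr : ∀ j, 0 < r j) (A : Matrix n n ℂ) :
    Qf r 1 A A = ∑ j, ((Aᴴ * A) j j) * ((((r j)⁻¹ : ℝ)) : ℂ) := by
  unfold Qf
  refine Finset.sum_congr rfl fun j _ => ?_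
  rw [Finset.sum_eq_single j]
  · rw [Matrix.one_apply_eq, lphi_self (hr j), one_mul]
  · intro k _ hk
    rw [Matrix.one_apply_ne hk, zero_mul, zero_mul]
  · intro h; exact absurd (Finset.mem_univ j) h

lemma Qf_self_nonneg (hr : ∀ j, 0 < r j) (hG : G.PosSemidef) (A : Matrix n n ℂ) :
    ∃ c : ℝ, 0 ≤ c ∧ Qf r G A A = (c : ℂ) := by
  classical
  have key : ∀ s : ℝ,
      ∑ j, ∑ k, G k j * ((Aᴴ * A) j k) * (((((r j + s) * (r k + s))⁻¹ : ℝ)) : ℂ)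
      = ((A * Matrix.diagonal (fun j => ((((r j + s)⁻¹ : ℝ)) : ℂ))) * G *
         (A * Matrix.diagonal (fun j => ((((r j + s)⁻¹ : ℝ)) : ℂ)))ᴴ).trace := by
    intro s
    set d : n → ℂ := fun j => ((((r j + s)⁻¹ : ℝ)) : ℂ) with hd
    set D := Matrix.diagonal d with hD
    have hDh : Dᴴ = D := by
      rw [hD, Matrix.diagonal_conjTranspose]
      congr 1
      funext j
      simp [hd, Pi.star_def]
    rw [Matrix.trace_mul_cycle (A * D) G ((A * D)ᴴ)]
    have e2 : (A * D)ᴴ * (A * D) * G = (D * (Aᴴ * A) * D) * G := by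
      rw [Matrix.conjTranspose_mul, hDh]
      noncomm_ring
    rw [e2, trace_mul_entries]
    refine Finset.sum_congr rfl fun j _ => Finset.sum_congr rfl fun k _ => ?_
    have h1 : (D * (Aᴴ * A) * D) j k = d j * ((Aᴴ * A) j k) * d k := by
      rw [hD, Matrix.mul_diagonal, Matrix.diagonal_mul]
    rw [h1, hd]
    simp only
    rw [mul_inv, Complex.ofReal_mul]
    ring
  have hint : ∀ j k : n, IntegrableOn
      (fun s : ℝ => G k j * ((Aᴴ * A) j k) * (((((r j + s) * (r k + s))⁻¹ : ℝ)) : ℂ))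
      (Ioi (0:ℝ)) := by
    intro j k
    have h0 : IntegrableOn (fun s : ℝ => (((r j + s) * (r k + s))⁻¹ : ℝ)) (Ioi (0:ℝ)) :=
      lphi_integrableOn (hr j) (hr k)
    exact (h0.ofReal (𝕜 := ℂ)).const_mul _
  -- the integrand as ℝ → ℂ, and its real version
  set g : ℝ → ℂ := fun s =>
      ∑ j, ∑ k, G k j * ((Aᴴ * A) j k) * (((((r j + s) * (r k + s))⁻¹ : ℝ)) : ℂ) with hg
  have hgint : IntegrableOn g (Ioi (0:ℝ)) :=
    MeasureTheory.integrable_finset_sum _ fun j _ =>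
      MeasureTheory.integrable_finset_sum _ fun k _ => hint j k
  have hgc : ∀ s : ℝ, ∃ c : ℝ, 0 ≤ c ∧ g s = (c:ℂ) := by
    intro s
    rw [hg]
    simp only
    rw [key s]
    exact psd_trace_eq (hG.mul_mul_conjTranspose_same _)
  set q : ℝ → ℝ := fun s => (g s).re with hq
  have hq0 : ∀ s, 0 ≤ q s := by
    intro s; obtain ⟨c, hc0, hc⟩ := hgc s; simp [hq, hc, hc0]
  have hgq : ∀ s, g s = ((q s : ℝ) : ℂ) := by
    intro s; obtain ⟨c, hc0, hc⟩ := hgc s; simp [hq, hc]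
  have main : Qf r G A A = ∫ s in Ioi (0:ℝ), g s := by
    unfold Qf
    rw [MeasureTheory.integral_finset_sum _ (fun j _ =>
      MeasureTheory.integrable_finset_sum _ fun k _ => hint j k)]
    refine Finset.sum_congr rfl fun j _ => ?_
    rw [MeasureTheory.integral_finset_sum _ (fun k _ => hint j k)]
    refine Finset.sum_congr rfl fun k _ => ?_
    rw [integral_const_mul]
    congr 1
    unfold lphi
    exact (integral_ofReal (𝕜 := ℂ) (f := fun s => (((r j + s) * (r k + s))⁻¹ : ℝ))).symm
  refine ⟨∫ s in Ioi (0:ℝ), q s, ?_, ?_⟩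
  · exact setIntegral_nonneg measurableSet_Ioi fun s _ => hq0 s
  · rw [main]
    calc ∫ s in Ioi (0:ℝ), g s = ∫ s in Ioi (0:ℝ), ((q s : ℝ) : ℂ) :=
          setIntegral_congr_fun measurableSet_Ioi fun s _ => hgq s
      _ = ((∫ s in Ioi (0:ℝ), q s : ℝ) : ℂ) := integral_ofReal

end MatrixAux2

section MatrixAux3
open Matrix
open scoped ComplexOrder
set_option linter.unusedSectionVars false
set_option maxHeartbeats 1000000

variable {n : Type*} [Fintype n] [DecidableEq n]
variable {r : n → ℝ}

lemma diagonal_eq_one_of {d : n → ℂ} (h : ∀ j, d j = 1) : Matrix.diagonal d = 1 := by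
  have hd : d = fun _ => 1 := funext h
  rw [hd, Matrix.diagonal_one]

open scoped MatrixOrder in
lemma diag_sq_trace (hr : ∀ j, 0 < r j) (X : Matrix n n ℂ) (hX : X.PosSemidef)
    (hXD : (Matrix.diagonal (fun j => ((r j : ℝ) : ℂ)) - X).PosSemidef) :
    ∃ cN : ℝ, 0 ≤ cN ∧
      X.trace - ∑ j, ((X * X) j j * ((((r j)⁻¹ : ℝ)) : ℂ)) = (cN : ℂ) := by
  classical
  set Dh := Matrix.diagonal (fun j => ((Real.sqrt (r j) : ℝ) : ℂ)) with hDh_def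
  set Dih := Matrix.diagonal (fun j => (((Real.sqrt (r j) : ℝ) : ℂ))⁻¹) with hDih_def
  have hsqrt_ne : ∀ j, ((Real.sqrt (r j) : ℝ) : ℂ) ≠ 0 := by
    intro j
    simp only [ne_eq, Complex.ofReal_eq_zero]
    exact (Real.sqrt_pos.mpr (hr j)).ne'
  have hDhDih : Dh * Dih = 1 := by
    rw [hDh_def, hDih_def, Matrix.diagonal_mul_diagonal]
    exact diagonal_eq_one_of fun j => mul_inv_cancel₀ (hsqrt_ne j)
  have hDihDh : Dih * Dh = 1 := by
    rw [hDh_def, hDih_def, Matrix.diagonal_mul_diagonal]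
    exact diagonal_eq_one_of fun j => inv_mul_cancel₀ (hsqrt_ne j)
  have hDih_herm : Dihᴴ = Dih := by
    rw [hDih_def, Matrix.diagonal_conjTranspose]
    congr 1
    funext j
    simp [Pi.star_def]
  have hDh_herm : Dhᴴ = Dh := by
    rw [hDh_def, Matrix.diagonal_conjTranspose]
    congr 1
    funext j
    simp [Pi.star_def]
  have hsq_mul : ∀ j, ((Real.sqrt (r j) : ℝ) : ℂ) * ((Real.sqrt (r j) : ℝ) : ℂ) = ((r j : ℝ) : ℂ) := by
    intro j
    rw [← Complex.ofReal_mul, Real.mul_self_sqrt (hr j).le]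
  set K := Dih * X * Dih with hK_def
  have hK : K.PosSemidef := by
    have h := hX.conjTranspose_mul_mul_same Dih
    rwa [hDih_herm] at h
  have h1K : (1 - K).PosSemidef := by
    have h := hXD.conjTranspose_mul_mul_same Dih
    rw [hDih_herm] at h
    have e : Dih * (Matrix.diagonal (fun j => ((r j : ℝ) : ℂ)) - X) * Dih = 1 - K := by
      rw [Matrix.mul_sub, Matrix.sub_mul, hK_def]
      congr 1
      rw [hDih_def, Matrix.diagonal_mul_diagonal, Matrix.diagonal_mul_diagonal]
      refine diagonal_eq_one_of fun j => ?_
      rw [← hsq_mul j]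
      field_simp [hsqrt_ne j]
    rwa [e] at h
  set sqK := CFC.sqrt K with hsqK_def
  have hsq : sqK * sqK = K := CFC.sqrt_mul_sqrt_self K hK.nonneg
  have hsqK_herm : sqKᴴ = sqK := (CFC.sqrt_nonneg K).posSemidef.1
  have hM : (sqK * (1 - K) * sqK).PosSemidef := by
    have h := h1K.conjTranspose_mul_mul_same sqK
    rwa [hsqK_herm] at h
  have hMeq : sqK * (1 - K) * sqK = K - K * K := by
    have e1 : sqK * (1 - K) * sqK = sqK * sqK - sqK * K * sqK := by noncomm_ring
    have e2 : sqK * K * sqK = (sqK * sqK) * (sqK * sqK) := by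
      conv_lhs => rw [← hsq]
      noncomm_ring
    rw [e1, e2, hsq]
  have hN : (Dh * (K - K * K) * Dh).PosSemidef := by
    rw [← hMeq]
    have h := hM.mul_mul_conjTranspose_same Dh
    rwa [hDh_herm] at h
  obtain ⟨cN, hcN0, hcN⟩ := psd_trace_eq hN
  refine ⟨cN, hcN0, ?_⟩
  rw [← hcN]
  have e3 : Dh * (K - K * K) * Dh = X - X * Dih * Dih * X := by
    rw [Matrix.mul_sub, Matrix.sub_mul, hK_def]
    congr 1
    · calc Dh * (Dih * X * Dih) * Dh = (Dh * Dih) * X * (Dih * Dh) := by noncomm_ring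
        _ = X := by rw [hDhDih, hDihDh, one_mul, mul_one]
    · calc Dh * (Dih * X * Dih * (Dih * X * Dih)) * Dh
          = (Dh * Dih) * X * Dih * Dih * X * (Dih * Dh) := by noncomm_ring
        _ = X * Dih * Dih * X := by rw [hDhDih, hDihDh, one_mul, mul_one]
  rw [e3]
  rw [Matrix.trace_sub]
  congr 1
  have hDihDih : Dih * Dih = Matrix.diagonal (fun j => ((((r j)⁻¹ : ℝ)) : ℂ)) := by
    rw [hDih_def, Matrix.diagonal_mul_diagonal]
    have he : (fun j => ((Real.sqrt (r j) : ℂ))⁻¹ * ((Real.sqrt (r j) : ℂ))⁻¹)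
        = fun j => ((((r j)⁻¹ : ℝ)) : ℂ) := by
      funext j
      rw [← mul_inv, hsq_mul j, ← Complex.ofReal_inv]
    rw [he]
  have e4 : X * Dih * Dih * X = X * Matrix.diagonal (fun j => ((((r j)⁻¹ : ℝ)) : ℂ)) * X := by
    rw [mul_assoc X Dih Dih, hDihDih]
  rw [e4]
  have e5 : (X * Matrix.diagonal (fun j => ((((r j)⁻¹ : ℝ)) : ℂ)) * X).trace
      = (Matrix.diagonal (fun j => ((((r j)⁻¹ : ℝ)) : ℂ)) * (X * X)).trace := by
    rw [Matrix.trace_mul_cycle X (Matrix.diagonal (fun j => ((((r j)⁻¹ : ℝ)) : ℂ))) X]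
    rw [Matrix.trace_mul_comm (X * X)]
  rw [e5, Matrix.trace]
  simp only [Matrix.diag_apply, Matrix.diagonal_mul]
  exact Finset.sum_congr rfl fun j _ => by ring

lemma Qf_cs (hr : ∀ j, 0 < r j) {G : Matrix n n ℂ} (hG : G.PosSemidef)
    (A B : Matrix n n ℂ) (a b : ℝ) (ha : 0 ≤ a) (hb : 0 ≤ b)
    (hA : Qf r G A A = (a : ℂ)) (hB : Qf r G B B = (b : ℂ)) :
    ‖Qf r G A B‖ ≤ Real.sqrt (a * b) := by
  set m := ‖Qf r G A B‖ with hm_def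
  rcases eq_or_lt_of_le (norm_nonneg (Qf r G A B)) with h0 | hmpos
  · rw [hm_def, ← h0]
    exact Real.sqrt_nonneg _
  · have hm0 : 0 < m := by rw [hm_def]; exact hmpos
    -- key quadratic inequality
    have key : ∀ t : ℝ, 0 ≤ a + 2*t*m + t^2*b := by
      intro t
      set ζ : ℂ := starRingEnd ℂ (Qf r G A B) / (m : ℂ) with hζ
      have hmne : (m : ℂ) ≠ 0 := by
        simp only [ne_eq, Complex.ofReal_eq_zero]
        exact hm0.ne'
      have hζQ : ζ * Qf r G A B = (m : ℂ) := by
        rw [hζ, div_mul_eq_mul_div, mul_comm, Complex.mul_conj]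
        rw [Complex.normSq_eq_norm_sq, ← hm_def]
        rw [div_eq_iff hmne]
        push_cast
        try ring
      have hζabs : ‖ζ‖ = 1 := by
        rw [hζ, norm_div, Complex.norm_conj, ← hm_def, Complex.norm_real,
          Real.norm_of_nonneg hm0.le]
        exact div_self hm0.ne'
      set c : ℂ := (t : ℂ) * ζ with hc
      have hcc : starRingEnd ℂ c * c = ((t^2 : ℝ) : ℂ) := by
        have habs : starRingEnd ℂ c * c = ((‖c‖)^2 : ℝ) := by
          rw [mul_comm, Complex.mul_conj, Complex.normSq_eq_norm_sq]
        rw [habs]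
        congr 1
        rw [hc, norm_mul, hζabs, Complex.norm_real, Real.norm_eq_abs]
        rw [mul_one, sq_abs]
      have expand : Qf r G (A + c • B) (A + c • B) = ((a + 2*t*m + t^2*b : ℝ) : ℂ) := by
        rw [Qf_add_left, Qf_add_right, Qf_add_right]
        rw [Qf_smul_left, Qf_smul_right, Qf_smul_left, Qf_smul_right]
        rw [hA, hB]
        have h1 : c * Qf r G A B = ((t*m : ℝ) : ℂ) := by
          rw [hc, mul_assoc, hζQ]
          push_cast; ring
        have h2 : starRingEnd ℂ c * Qf r G B A = ((t*m : ℝ) : ℂ) := by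
          have : Qf r G B A = starRingEnd ℂ (Qf r G A B) := (Qf_conj hG.1).symm
          rw [this, ← _root_.map_mul (starRingEnd ℂ), h1]
          simp [Complex.conj_ofReal]
        calc (a:ℂ) + c * Qf r G A B + (starRingEnd ℂ c * Qf r G B A
              + starRingEnd ℂ c * (c * (b:ℂ)))
            = (a:ℂ) + c * Qf r G A B + starRingEnd ℂ c * Qf r G B A
              + (starRingEnd ℂ c * c) * (b:ℂ) := by ring
          _ = (a:ℂ) + ((t*m : ℝ) : ℂ) + ((t*m : ℝ) : ℂ) + ((t^2 : ℝ) : ℂ) * (b:ℂ) := by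
              rw [h1, h2, hcc]
          _ = ((a + 2*t*m + t^2*b : ℝ) : ℂ) := by push_cast; ring
      obtain ⟨c', hc'0, hc'⟩ := Qf_self_nonneg hr hG (A + c • B)
      rw [expand] at hc'
      have : a + 2*t*m + t^2*b = c' := by exact_mod_cast hc'
      linarith
    -- discriminant argument
    rcases eq_or_lt_of_le hb with hb0 | hbpos
    · exfalso
      have h := key (-(a+1)/(2*m))
      rw [← hb0] at h
      have he : 2 * (-(a+1)/(2*m)) * m = -(a+1) := by
        field_simp
      rw [he] at h
      nlinarith
    · have h := key (-m/b)
      have hm2 : m^2 ≤ a * b := by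
        have e : a + 2*(-m/b)*m + (-m/b)^2*b = a - m^2/b := by
          field_simp
          ring
        rw [e] at h
        have : m^2/b ≤ a := by linarith
        calc m^2 = (m^2/b) * b := by field_simp
          _ ≤ a * b := by exact mul_le_mul_of_nonneg_right this hb
      calc m = Real.sqrt (m^2) := by rw [Real.sqrt_sq hmpos.le]
        _ ≤ Real.sqrt (a*b) := Real.sqrt_le_sqrt hm2

end MatrixAux3

section Main
open Matrix Finset
open scoped ComplexOrder
set_option linter.unusedSectionVars false
set_option maxHeartbeats 2000000

variable {n : Type*} [Fintype n] [DecidableEq n]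

lemma Qf_self_bounded {r : n → ℝ} (hr : ∀ j, 0 < r j) {G X : Matrix n n ℂ}
    (hG : G.PosSemidef) (hG1 : ((1 : Matrix n n ℂ) - G).PosSemidef) (hX : X.PosSemidef)
    (hXD : (Matrix.diagonal (fun j => ((r j : ℝ) : ℂ)) - X).PosSemidef)
    (t : ℝ) (htrace : X.trace = (t : ℂ)) :
    ∃ c : ℝ, 0 ≤ c ∧ c ≤ t ∧ Qf r G X X = (c : ℂ) := by
  obtain ⟨c, hc0, hc⟩ := Qf_self_nonneg hr hG X
  obtain ⟨c', hc'0, hc'⟩ := Qf_self_nonneg hr hG1 X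
  obtain ⟨cN, hcN0, hcN⟩ := diag_sq_trace hr X hX hXD
  refine ⟨c, hc0, ?_, hc⟩
  have hsum : Qf r G X X + Qf r (1 - G) X X = Qf r 1 X X := by
    rw [← Qf_G_add]
    norm_num
  have hone : Qf r 1 X X = ∑ j, ((X * X) j j * ((((r j)⁻¹ : ℝ)) : ℂ)) := by
    rw [Qf_one hr X, hX.1]
  have hSig : (∑ j, ((X * X) j j * ((((r j)⁻¹ : ℝ)) : ℂ))) = ((t - cN : ℝ) : ℂ) := by
    rw [htrace] at hcN
    have h2 : (∑ j, ((X * X) j j * ((((r j)⁻¹ : ℝ)) : ℂ))) = (t : ℂ) - (cN : ℂ) := by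
      linear_combination -hcN
    rw [h2]
    push_cast
    ring
  have hfin : (c : ℂ) + (c' : ℂ) = ((t - cN : ℝ) : ℂ) := by
    rw [← hc, ← hc', hsum, hone, hSig]
  have hcc : c + c' = t - cN := by exact_mod_cast hfin
  linarith

theorem mixing_rate_general_bound' {ι : Type*} [Fintype ι] [DecidableEq ι]
    (p : ι → ℝ) (ρ : ι → Matrix n n ℂ)
    (hp : ∀ x, 0 ≤ p x) (hp1 : ∑ x, p x = 1)
    (hρx : ∀ x, (ρ x).PosSemidef) (htr : ∀ x, (ρ x).trace = 1)
    (hρ : (∑ x, p x • ρ x).PosDef)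
    (x₀ : ι) (hx₀ : ∀ x, p x ≤ p x₀)
    (H : ι → Matrix n n ℂ)
    (hH0 : ∀ x, (H x).PosSemidef)
    (hH1 : ∀ x, ((1 : Matrix n n ℂ) - H x).PosSemidef)
    (hHx₀ : H x₀ = 1) :
    ‖((-Complex.I) * ∑ x, (p x : ℂ) *
        (H x * (ρ x * hρ.1.cfc Real.log - hρ.1.cfc Real.log * ρ x)).trace)‖
      ≤ 2 * ∑ x ∈ univ.erase x₀, ∑ y ∈ univ.erase x,
          Real.sqrt (p x * p y) := by
  classical
  set U : Matrix n n ℂ := (Matrix.IsHermitian.eigenvectorUnitary hρ.1 : Matrix n n ℂ) with hU_def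
  set r : n → ℝ := hρ.1.eigenvalues with hr_def
  have hr : ∀ j, 0 < r j := fun j => hρ.eigenvalues_pos j
  have hUstar : star U * U = 1 := Unitary.coe_star_mul_self _
  have hUUstar : U * star U = 1 := Unitary.coe_mul_star_self _
  set Λd : Matrix n n ℂ := Matrix.diagonal (fun j => ((Real.log (r j) : ℝ) : ℂ)) with hΛ_def
  have hL : hρ.1.cfc Real.log = U * Λd * star U := rfl
  set D : Matrix n n ℂ := Matrix.diagonal (fun j => ((r j : ℝ) : ℂ)) with hD_def
  have hspec : star U * (∑ x, p x • ρ x) * U = D := by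
    have h := hρ.1.conjStarAlgAut_star_eigenvectorUnitary
    rw [Unitary.conjStarAlgAut_apply, Unitary.coe_star, star_star] at h
    exact h
  set P : ι → Matrix n n ℂ := fun x => star U * (p x • ρ x) * U with hP_def
  set G : ι → Matrix n n ℂ := fun x => star U * H x * U with hG_def
  have hPsum : ∑ x, P x = D := by
    rw [hP_def, ← hspec, Finset.mul_sum, Finset.sum_mul]
  have hPpsd : ∀ x, (P x).PosSemidef := by
    intro x
    have h1 : (p x • ρ x).PosSemidef := smul_psd (hp x) (hρx x)
    have h2 := h1.conjTranspose_mul_mul_same U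
    rwa [← Matrix.star_eq_conjTranspose] at h2
  have hPtrace : ∀ x, (P x).trace = ((p x : ℝ) : ℂ) := by
    intro x
    rw [hP_def]
    simp only
    rw [Matrix.trace_mul_cycle, hUUstar, one_mul, Matrix.trace_smul, htr x]
    rw [Complex.real_smul, mul_one]
  have hD_sub_psd : ∀ x, (D - P x).PosSemidef := by
    intro x
    have he : D - P x = ∑ y ∈ univ.erase x, P y := by
      rw [← hPsum, ← Finset.add_sum_erase _ P (Finset.mem_univ x)]
      abel
    rw [he]
    exact Finset.sum_induction P _ (fun a b ha hb => ha.add hb) Matrix.PosSemidef.zero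
      (fun y _ => hPpsd y)
  have hGpsd : ∀ x, (G x).PosSemidef := by
    intro x
    have h2 := (hH0 x).conjTranspose_mul_mul_same U
    rwa [← Matrix.star_eq_conjTranspose] at h2
  have hG1psd : ∀ x, ((1 : Matrix n n ℂ) - G x).PosSemidef := by
    intro x
    have h2 := (hH1 x).conjTranspose_mul_mul_same U
    rw [← Matrix.star_eq_conjTranspose] at h2
    have e : star U * ((1 : Matrix n n ℂ) - H x) * U = 1 - G x := by
      rw [Matrix.mul_sub, Matrix.sub_mul, mul_one, hUstar, hG_def]
    rwa [e] at h2
  have hGx₀ : G x₀ = 1 := by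
    rw [hG_def]
    simp only
    rw [hHx₀, mul_one, hUstar]
  set S : ι → ℂ := fun x => ((G x) * (P x * Λd - Λd * P x)).trace with hS_def
  have conj_mul : ∀ M N : Matrix n n ℂ,
      (U * M * star U) * (U * N * star U) = U * (M * N) * star U := by
    intro M N
    have h : star U * (U * (N * star U)) = N * star U := by
      rw [← mul_assoc, hUstar, one_mul]
    calc (U * M * star U) * (U * N * star U)
        = U * (M * (star U * (U * (N * star U)))) := by simp only [mul_assoc]
      _ = U * (M * (N * star U)) := by rw [h]
      _ = U * (M * N) * star U := by simp only [mul_assoc]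
  have conj_trace : ∀ M : Matrix n n ℂ, (U * M * star U).trace = M.trace := by
    intro M
    rw [Matrix.trace_mul_cycle, hUstar, one_mul]
  have hρxΦ : ∀ x, U * (star U * ρ x * U) * star U = ρ x := by
    intro x
    have e : U * (star U * ρ x * U) * star U = (U * star U) * ρ x * (U * star U) := by
      noncomm_ring
    rw [e, hUUstar, one_mul, mul_one]
  have hHxΦ : ∀ x, U * (star U * H x * U) * star U = H x := by
    intro x
    have e : U * (star U * H x * U) * star U = (U * star U) * H x * (U * star U) := by
      noncomm_ring
    rw [e, hUUstar, one_mul, mul_one]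
  have hSx : ∀ x, (p x : ℂ) *
      (H x * (ρ x * (U * Λd * star U) - (U * Λd * star U) * ρ x)).trace = S x := by
    intro x
    have key : (H x * (ρ x * (U * Λd * star U) - (U * Λd * star U) * ρ x)).trace
        = ((G x) * ((star U * ρ x * U) * Λd - Λd * (star U * ρ x * U))).trace := by
      conv_lhs => rw [← hHxΦ x, ← hρxΦ x]
      rw [show U * (star U * ρ x * U) * star U * (U * Λd * star U)
          = U * ((star U * ρ x * U) * Λd) * star U from conj_mul _ _]
      rw [show (U * Λd * star U) * (U * (star U * ρ x * U) * star U)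
          = U * (Λd * (star U * ρ x * U)) * star U from conj_mul _ _]
      rw [show U * ((star U * ρ x * U) * Λd) * star U - U * (Λd * (star U * ρ x * U)) * star U
          = U * ((star U * ρ x * U) * Λd - Λd * (star U * ρ x * U)) * star U by
        rw [Matrix.mul_sub, Matrix.sub_mul]]
      rw [show (U * (star U * H x * U) * star U)
            * (U * ((star U * ρ x * U) * Λd - Λd * (star U * ρ x * U)) * star U)
          = U * ((star U * H x * U)
            * ((star U * ρ x * U) * Λd - Λd * (star U * ρ x * U))) * star U from conj_mul _ _]
      rw [conj_trace]
    rw [key, hS_def]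
    simp only
    have hPx : P x = (p x) • (star U * ρ x * U) := by
      rw [hP_def]
      simp only
      rw [Matrix.mul_smul, Matrix.smul_mul]
    rw [hPx]
    rw [Matrix.smul_mul, Matrix.mul_smul, ← smul_sub, Matrix.mul_smul, Matrix.trace_smul,
      Complex.real_smul]
  have hLHS : ((-Complex.I) * ∑ x, (p x : ℂ) *
      (H x * (ρ x * hρ.1.cfc Real.log - hρ.1.cfc Real.log * ρ x)).trace)
      = (-Complex.I) * ∑ x, S x := by
    congr 1
    refine Finset.sum_congr rfl fun x _ => ?_
    rw [hL]
    exact hSx x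
  rw [hLHS]
  rw [show ‖-Complex.I * ∑ x, S x‖
      = ‖-Complex.I‖ * ‖∑ x, S x‖ from norm_mul _ _]
  have habsI : ‖-Complex.I‖ = 1 := by simp
  rw [habsI, one_mul]
  -- entrywise reduction to Qf
  have hS_entry : ∀ x, S x = ∑ y ∈ univ.erase x,
      (Qf r (G x) (P x) (P y) - Qf r (G x) (P y) (P x)) := by
    intro x
    have step1 : S x = ∑ j, ∑ k, (G x) k j * ((P x * D - D * P x) j k)
        * ((lphi (r j) (r k) : ℝ) : ℂ) := by
      rw [hS_def]
      simp only
      rw [trace_mul_entries, Finset.sum_comm]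
      refine Finset.sum_congr rfl fun j _ => Finset.sum_congr rfl fun k _ => ?_
      have hlog : ((Real.log (r k) : ℝ) : ℂ) - ((Real.log (r j) : ℝ) : ℂ)
          = (((r k : ℝ) : ℂ) - ((r j : ℝ) : ℂ)) * ((lphi (r j) (r k) : ℝ) : ℂ) := by
        rw [← Complex.ofReal_sub, ← lphi_mul (hr j) (hr k), Complex.ofReal_mul,
          Complex.ofReal_sub]
      rw [Matrix.sub_apply, Matrix.sub_apply, Matrix.mul_diagonal, Matrix.diagonal_mul,
        Matrix.mul_diagonal, Matrix.diagonal_mul]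
      linear_combination ((G x) k j * (P x) j k) * hlog
    rw [step1]
    have hcomm : P x * D - D * P x = ∑ y, (P x * P y - P y * P x) := by
      rw [← hPsum, Finset.mul_sum, Finset.sum_mul, Finset.sum_sub_distrib]
    rw [hcomm]
    have step2 : (∑ j, ∑ k, (G x) k j * ((∑ y, (P x * P y - P y * P x)) j k)
        * ((lphi (r j) (r k) : ℝ) : ℂ))
        = ∑ y, (∑ j, ∑ k, (G x) k j * ((P x * P y - P y * P x) j k)
            * ((lphi (r j) (r k) : ℝ) : ℂ)) := by
      calc (∑ j, ∑ k, (G x) k j * ((∑ y, (P x * P y - P y * P x)) j k)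
          * ((lphi (r j) (r k) : ℝ) : ℂ))
          = ∑ j, ∑ k, ∑ y, (G x) k j * ((P x * P y - P y * P x) j k)
              * ((lphi (r j) (r k) : ℝ) : ℂ) := by
            refine Finset.sum_congr rfl fun j _ => Finset.sum_congr rfl fun k _ => ?_
            rw [Matrix.sum_apply, Finset.mul_sum, Finset.sum_mul]
        _ = ∑ j, ∑ y, ∑ k, (G x) k j * ((P x * P y - P y * P x) j k)
              * ((lphi (r j) (r k) : ℝ) : ℂ) :=
            Finset.sum_congr rfl fun j _ => Finset.sum_comm
        _ = ∑ y, ∑ j, ∑ k, (G x) k j * ((P x * P y - P y * P x) j k)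
              * ((lphi (r j) (r k) : ℝ) : ℂ) := Finset.sum_comm
    rw [step2]
    have step3 : ∀ y, (∑ j, ∑ k, (G x) k j * ((P x * P y - P y * P x) j k)
        * ((lphi (r j) (r k) : ℝ) : ℂ))
        = Qf r (G x) (P x) (P y) - Qf r (G x) (P y) (P x) := by
      intro y
      unfold Qf
      rw [(hPpsd x).1, (hPpsd y).1, ← Finset.sum_sub_distrib]
      refine Finset.sum_congr rfl fun j _ => ?_
      rw [← Finset.sum_sub_distrib]
      refine Finset.sum_congr rfl fun k _ => ?_
      rw [Matrix.sub_apply]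
      ring
    rw [Finset.sum_congr rfl fun y _ => step3 y]
    rw [← Finset.add_sum_erase _ _ (Finset.mem_univ x), sub_self, zero_add]
  -- final bound
  have hSx₀ : S x₀ = 0 := by
    rw [hS_def]
    simp only
    rw [hGx₀, one_mul, Matrix.trace_sub, Matrix.trace_mul_comm]
    exact sub_self _
  have hbound : ∀ x ∈ univ.erase x₀,
      ‖S x‖ ≤ ∑ y ∈ univ.erase x, 2 * Real.sqrt (p x * p y) := by
    intro x _
    rw [hS_entry x]
    refine le_trans (norm_sum_le _ _) (Finset.sum_le_sum ?_)
    intro y _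
    obtain ⟨cx, hcx0, hcxle, hcxeq⟩ :=
      Qf_self_bounded hr (hGpsd x) (hG1psd x) (hPpsd x) (hD_sub_psd x) (p x) (hPtrace x)
    obtain ⟨cy, hcy0, hcyle, hcyeq⟩ :=
      Qf_self_bounded hr (hGpsd x) (hG1psd x) (hPpsd y) (hD_sub_psd y) (p y) (hPtrace y)
    have h1 : ‖Qf r (G x) (P x) (P y)‖ ≤ Real.sqrt (cx * cy) :=
      Qf_cs hr (hGpsd x) (P x) (P y) cx cy hcx0 hcy0 hcxeq hcyeq
    have h2 : ‖Qf r (G x) (P y) (P x)‖ = ‖Qf r (G x) (P x) (P y)‖ := by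
      rw [← Qf_conj (hGpsd x).1, Complex.norm_conj]
    have h3 : Real.sqrt (cx * cy) ≤ Real.sqrt (p x * p y) :=
      Real.sqrt_le_sqrt (mul_le_mul hcxle hcyle hcy0 (le_trans hcx0 hcxle))
    have h4 : ‖Qf r (G x) (P x) (P y) - Qf r (G x) (P y) (P x)‖
        ≤ ‖Qf r (G x) (P x) (P y)‖ + ‖Qf r (G x) (P y) (P x)‖ := by
      exact
        norm_sub_le (Qf r (G x) (P x) (P y)) (Qf r (G x) (P y) (P x))
    rw [h2] at h4
    linarith
  calc ‖∑ x, S x‖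
      = ‖∑ x ∈ univ.erase x₀, S x‖ := by
        rw [← Finset.add_sum_erase _ S (Finset.mem_univ x₀), hSx₀, zero_add]
    _ ≤ ∑ x ∈ univ.erase x₀, ‖S x‖ := norm_sum_le _ _
    _ ≤ ∑ x ∈ univ.erase x₀, ∑ y ∈ univ.erase x, 2 * Real.sqrt (p x * p y) :=
        Finset.sum_le_sum hbound
    _ = 2 * ∑ x ∈ univ.erase x₀, ∑ y ∈ univ.erase x, Real.sqrt (p x * p y) := by
        rw [Finset.mul_sum]
        exact Finset.sum_congr rfl fun x _ => (Finset.mul_sum _ _ _).symm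

end Main

/-- General mixing-rate bound: for an ensemble `{(p x, ρ x)}` with `ρ = Σ p x • ρ x`
positive definite, `x₀` maximizing `p`, and Hamiltonians `0 ≤ H x ≤ I` with `H x₀ = I`,
the mixing rate `Λ = −i Σ_x p x Tr(H x [ρ x, ln ρ])` satisfies
`|Λ| ≤ 2 Σ_{x ≠ x₀} Σ_{y ≠ x} √(p x · p y)`. -/
theorem mixing_rate_general_bound {ι n : Type*} [Fintype ι] [DecidableEq ι]
    [Fintype n] [DecidableEq n]
    (p : ι → ℝ) (ρ : ι → Matrix n n ℂ)
    (hp : ∀ x, 0 ≤ p x) (hp1 : ∑ x, p x = 1)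
    (hρx : ∀ x, (ρ x).PosSemidef) (htr : ∀ x, (ρ x).trace = 1)
    (hρ : (∑ x, p x • ρ x).PosDef)
    (x₀ : ι) (hx₀ : ∀ x, p x ≤ p x₀)
    (H : ι → Matrix n n ℂ)
    (hH0 : ∀ x, (H x).PosSemidef)
    (hH1 : ∀ x, ((1 : Matrix n n ℂ) - H x).PosSemidef)
    (hHx₀ : H x₀ = 1) :
    ‖((-Complex.I) * ∑ x, (p x : ℂ) *
        (H x * (ρ x * hρ.1.cfc Real.log - hρ.1.cfc Real.log * ρ x)).trace)‖
      ≤ 2 * ∑ x ∈ univ.erase x₀, ∑ y ∈ univ.erase x,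
          Real.sqrt (p x * p y) := by
  exact mixing_rate_general_bound' p ρ hp hp1 hρx htr hρ x₀ hx₀ H hH0 hH1 hHx₀
end
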